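/- arXiv:1602.01596 — 4 statements merged into one kernel-verified Lean document; each statement's English description precedes it below -/
import Mathlib

section
/- Every nonabelian semidirect product (ℤ/2 × ℤ/2) ⋊ ℤ/3 is isomorphic to the alternating group A₄. -/
abbrev Vg := Multiplicative (ZMod 2 × ZMod 2)
abbrev Cg := Multiplicative (ZMod 3)
abbrev A4 := alternatingGroup (Fin 4)

def cmap : MulAut Vg where
  toFun p := Multiplicative.ofAdd (p.toAdd.2, p.toAdd.1 + p.toAdd.2)
  invFun p := Multiplicative.ofAdd (p.toAdd.1 + p.toAdd.2, p.toAdd.1)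
  left_inv := by decide
  right_inv := by decide
  map_mul' := by decide

theorem classify : ∀ a : MulAut Vg, a^3 = 1 → a ≠ 1 → a = cmap ∨ a = cmap⁻¹ := by
  have h : ∀ a : MulAut Vg, ¬(a^3 = 1) ∨ a = 1 ∨ a = cmap ∨ a = cmap⁻¹ := by decide
  intro a h1 h2
  rcases h a with h' | h' | h' | h' <;> tauto

def va : A4 := ⟨Equiv.swap 0 1 * Equiv.swap 2 3, Equiv.Perm.mem_alternatingGroup.mpr (by decide)⟩
def vb : A4 := ⟨Equiv.swap 0 2 * Equiv.swap 1 3, Equiv.Perm.mem_alternatingGroup.mpr (by decide)⟩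
def tt : A4 := ⟨Equiv.swap 0 1 * Equiv.swap 1 2, Equiv.Perm.mem_alternatingGroup.mpr (by decide)⟩

def fV : Vg →* A4 where
  toFun p := va ^ (p.toAdd.1.val) * vb ^ (p.toAdd.2.val)
  map_one' := by decide
  map_mul' := by decide

def fC1 : Cg →* A4 where
  toFun g := (tt⁻¹) ^ (g.toAdd.val)
  map_one' := by decide
  map_mul' := by decide

def fC2 : Cg →* A4 where
  toFun g := tt ^ (g.toAdd.val)
  map_one' := by decide
  map_mul' := by decide

theorem aux (φ : Cg →* MulAut Vg) (f₁ : Vg →* A4) (f₂ : Cg →* A4)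
    (h : ∀ g, f₁.comp (φ g).toMonoidHom = (MulAut.conj (f₂ g)).toMonoidHom.comp f₁)
    (hinj : Function.Injective fun p : Vg × Cg => f₁ p.1 * f₂ p.2) :
    Nonempty ((Vg ⋊[φ] Cg) ≃* A4) := by
  let F := SemidirectProduct.lift f₁ f₂ h
  have hFinj : Function.Injective F := by
    intro x y hxy
    have h2 : (fun p : Vg × Cg => f₁ p.1 * f₂ p.2) (x.left, x.right)
        = (fun p : Vg × Cg => f₁ p.1 * f₂ p.2) (y.left, y.right) := hxy
    have h3 := hinj h2
    apply SemidirectProduct.ext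
    · exact congrArg Prod.fst h3
    · exact congrArg Prod.snd h3
  let e : (Vg × Cg) ≃ (Vg ⋊[φ] Cg) :=
    ⟨fun p => ⟨p.1, p.2⟩, fun x => (x.left, x.right), fun p => rfl, fun x => rfl⟩
  letI : Fintype (Vg ⋊[φ] Cg) := Fintype.ofEquiv _ e
  have hcard : Fintype.card (Vg ⋊[φ] Cg) = Fintype.card A4 := by
    rw [← Fintype.card_congr e]
    decide
  exact ⟨MulEquiv.ofBijective F ((Fintype.bijective_iff_injective_and_card F).2 ⟨hFinj, hcard⟩)⟩

/-- Every nonabelian semidirect product `(ℤ/2 × ℤ/2) ⋊ ℤ/3` is isomorphic to the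
alternating group `A₄`. -/
theorem nonabelian_klein_semidirect_z3_iso_A4
    (φ : Multiplicative (ZMod 3) →* MulAut (Multiplicative (ZMod 2 × ZMod 2)))
    (hnonab : ¬ ∀ x y : (Multiplicative (ZMod 2 × ZMod 2)) ⋊[φ] Multiplicative (ZMod 3),
      x * y = y * x) :
    Nonempty (((Multiplicative (ZMod 2 × ZMod 2)) ⋊[φ] Multiplicative (ZMod 3)) ≃*
      alternatingGroup (Fin 4)) := by
  set a := φ (Multiplicative.ofAdd (1 : ZMod 3)) with ha_def
  have hg : ∀ g : Cg, (Multiplicative.ofAdd (1 : ZMod 3)) ^ (Multiplicative.toAdd g).val = g := by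
    decide
  have key : ∀ g : Cg, φ g = a ^ (Multiplicative.toAdd g).val := by
    intro g
    conv_lhs => rw [← hg g]
    rw [map_pow]
  have ha3 : a ^ 3 = 1 := by
    rw [ha_def, ← map_pow, show (Multiplicative.ofAdd (1 : ZMod 3)) ^ 3 = 1 from by decide,
      map_one]
  have ha1 : a ≠ 1 := by
    intro h1
    apply hnonab
    have hφ : ∀ g, φ g = 1 := fun g => by rw [key g, h1, one_pow]
    intro x y
    apply SemidirectProduct.ext
    · show x.left * (φ x.right) y.left = y.left * (φ y.right) x.left
      rw [hφ, hφ]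
      exact mul_comm _ _
    · exact mul_comm _ _
  rcases classify a ha3 ha1 with ha | ha
  · have hcond : ∀ (k : Cg) (n : Vg),
        fV ((cmap ^ (Multiplicative.toAdd k).val) n) = fC1 k * fV n * (fC1 k)⁻¹ := by decide
    refine aux φ fV fC1 ?_ ?_
    · intro g
      refine MonoidHom.ext fun n => ?_
      simp only [MonoidHom.comp_apply, MulEquiv.coe_toMonoidHom, MulAut.conj_apply]
      rw [key g, ha]
      exact hcond g n
    · decide
  · have hcond : ∀ (k : Cg) (n : Vg),
        fV ((cmap⁻¹ ^ (Multiplicative.toAdd k).val) n) = fC2 k * fV n * (fC2 k)⁻¹ := by decide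
    refine aux φ fV fC2 ?_ ?_
    · intro g
      refine MonoidHom.ext fun n => ?_
      simp only [MonoidHom.comp_apply, MulEquiv.coe_toMonoidHom, MulAut.conj_apply]
      rw [key g, ha]
      exact hcond g n
    · decide
end

section
/- Every subgroup of A₅ of the form P ⋊ ℤ/m with P a p-group for some prime p and p ∤ m is isomorphic to one of: the trivial group, ℤ/2, ℤ/3, ℤ/5, ℤ/2 × ℤ/2, the dihedral group D₃ of order 6, the dihedral group D₅ of order 10, or A₄. -/
open Equiv Equiv.Perm in
lemma perm5_order (g : Perm (Fin 5)) (hg : sign g = 1) :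
    orderOf g = 1 ∨ orderOf g = 2 ∨ orderOf g = 3 ∨ orderOf g = 5 := by
  have hsum : g.cycleType.sum ≤ 5 := by
    rw [sum_cycleType]; simpa using Finset.card_le_univ g.support
  have h2 : ∀ x ∈ g.cycleType, 2 ≤ x := fun x hx => two_le_of_mem_cycleType hx
  have hlcm : g.cycleType.lcm = orderOf g := lcm_cycleType g
  have hsign : (1 : ℤˣ) = (-1) ^ (g.cycleType.sum + Multiset.card g.cycleType) := by
    rw [← sign_of_cycleType, hg]
  have hcard : Multiset.card g.cycleType ≤ 2 := by
    by_contra hc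
    push_neg at hc
    have := Multiset.card_nsmul_le_sum h2
    simp only [smul_eq_mul] at this
    omega
  interval_cases hc : Multiset.card g.cycleType
  · left
    rw [← hlcm, Multiset.card_eq_zero.mp hc]
    simp
  · obtain ⟨a, ha⟩ := Multiset.card_eq_one.mp hc
    have ha2 : 2 ≤ a := h2 a (by simp [ha])
    have ha5 : a ≤ 5 := by rw [ha] at hsum; simpa using hsum
    rw [ha] at hsign hlcm
    simp only [Multiset.lcm_singleton, normalize_eq] at hlcm
    simp only [Multiset.sum_singleton, Multiset.card_singleton] at hsign
    interval_cases a
    · right; left; omega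
    · right; right; left; omega
    · exact absurd hsign (by decide)
    · right; right; right; omega
  · obtain ⟨a, b, hab⟩ := Multiset.card_eq_two.mp hc
    have ha2 : 2 ≤ a := h2 a (by simp [hab])
    have hb2 : 2 ≤ b := h2 b (by simp [hab])
    rw [hab] at hsum hsign hlcm
    simp only [Multiset.insert_eq_cons, Multiset.lcm_cons, Multiset.lcm_singleton,
      normalize_eq, Multiset.sum_cons, Multiset.sum_singleton,
      Multiset.card_cons, Multiset.card_singleton] at hsum hsign hlcm
    have ha3 : a ≤ 3 := by omega
    have hb3 : b ≤ 3 := by omega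
    interval_cases a <;> interval_cases b
    · right; left; rw [← hlcm]; decide
    · exact absurd hsign (by decide)
    · exact absurd hsign (by decide)
    · omega


open Multiplicative

section helpers
variable {G : Type*} [Group G]

lemma pow_mod_eq {n : ℕ} (c : G) (h : c ^ n = 1) (k : ℕ) : c ^ (k % n) = c ^ k := by
  conv_rhs => rw [← Nat.mod_add_div k n, pow_add, pow_mul, h, one_pow, mul_one]

/-- hom out of `Multiplicative (ZMod n)` sending `ofAdd 1` to `c`. -/
def zmodPowHom (n : ℕ) [NeZero n] (c : G) (h : c ^ n = 1) : Multiplicative (ZMod n) →* G :=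
  MonoidHom.mk' (fun x => c ^ (Multiplicative.toAdd x).val)
    (by
      intro a b
      show c ^ (Multiplicative.toAdd a + Multiplicative.toAdd b).val = _
      rw [ZMod.val_add, pow_mod_eq c h, pow_add])

@[simp] lemma zmodPowHom_apply {n : ℕ} [NeZero n] (c : G) (h : c ^ n = 1) (x : ZMod n) :
    zmodPowHom n c h (ofAdd x) = c ^ x.val := rfl

lemma ofAdd_one_pow_val {n : ℕ} [NeZero n] (j : ZMod n) :
    (ofAdd (1 : ZMod n)) ^ j.val = ofAdd j := by
  rw [← ofAdd_nsmul, nsmul_eq_mul, mul_one, ZMod.natCast_val, ZMod.cast_id]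

lemma zmodHomExt {n : ℕ} [NeZero n] {f g : Multiplicative (ZMod n) →* G}
    (h : f (ofAdd 1) = g (ofAdd 1)) : f = g := by
  refine MonoidHom.ext fun x => ?_
  have hx : x = (ofAdd (1 : ZMod n)) ^ (Multiplicative.toAdd x : ZMod n).val := by
    rw [ofAdd_one_pow_val]; rfl
  rw [hx, map_pow, map_pow, h]

lemma zmodHomTriv {n : ℕ} [NeZero n] {f : Multiplicative (ZMod n) →* G}
    (h : f (ofAdd 1) = 1) : f = 1 :=
  zmodHomExt (by simp [h])

end helpers

section zmodAut
variable {q : ℕ} [NeZero q]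

lemma mulAut_zmod_apply (σ : MulAut (Multiplicative (ZMod q))) (j : ZMod q) :
    σ (ofAdd j) = ofAdd (j * Multiplicative.toAdd (σ (ofAdd 1))) := by
  conv_lhs => rw [← ofAdd_one_pow_val j, map_pow, ← ofAdd_toAdd (σ (ofAdd 1))]
  rw [← ofAdd_nsmul, nsmul_eq_mul, ZMod.natCast_val, ZMod.cast_id]

lemma mulAut_zmod_pow_apply (σ : MulAut (Multiplicative (ZMod q))) (t : ℕ) (j : ZMod q) :
    (σ ^ t) (ofAdd j) = ofAdd (j * (Multiplicative.toAdd (σ (ofAdd 1))) ^ t) := by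
  induction t generalizing j with
  | zero => simp
  | succ t ih =>
    rw [pow_succ, MulAut.mul_apply, mulAut_zmod_apply, ih, pow_succ]
    ring_nf

lemma mulAut_zmod_eq_one (σ : MulAut (Multiplicative (ZMod q)))
    (h : Multiplicative.toAdd (σ (ofAdd 1)) = 1) : σ = 1 := by
  ext1 x
  conv_lhs => rw [← ofAdd_toAdd x, mulAut_zmod_apply, h, mul_one]
  rfl
end zmodAut

section sd
open SemidirectProduct
variable {N G N₁ G₁ : Type*} [Group N] [Group G] [Group N₁] [Group G₁]

/-- underlying equiv of semidirect product with the product type -/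
def sdEquivProd {φ : G →* MulAut N} : (N ⋊[φ] G) ≃ N × G where
  toFun x := (x.left, x.right)
  invFun p := ⟨p.1, p.2⟩
  left_inv x := rfl
  right_inv p := rfl

lemma sd_card {φ : G →* MulAut N} : Nat.card (N ⋊[φ] G) = Nat.card N * Nat.card G := by
  rw [Nat.card_congr (sdEquivProd (φ := φ)), Nat.card_prod]

/-- congruence of semidirect products along an iso of the normal part -/
def sdCongrLeft {φ : G →* MulAut N} {φ₁ : G →* MulAut N₁} (e : N ≃* N₁)
    (h : ∀ g n, e (φ g n) = φ₁ g (e n)) : (N ⋊[φ] G) ≃* (N₁ ⋊[φ₁] G) where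
  toFun := SemidirectProduct.map e.toMonoidHom (MonoidHom.id G) (fun g => by ext n; simp [h])
  invFun := SemidirectProduct.map e.symm.toMonoidHom (MonoidHom.id G) (fun g => by
    ext n
    simp only [MonoidHom.comp_apply, MulEquiv.coe_toMonoidHom, MonoidHom.id_apply,
      MulEquiv.toMonoidHom_eq_coe, MonoidHom.coe_coe]
    rw [MulEquiv.symm_apply_eq, h, MulEquiv.apply_symm_apply])
  left_inv x := by ext <;> simp [SemidirectProduct.map]
  right_inv x := by ext <;> simp [SemidirectProduct.map]
  map_mul' := map_mul _

/-- congruence of semidirect products along an iso of the acting part -/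
def sdCongrRight {φ : G →* MulAut N} {φ₁ : G₁ →* MulAut N} (α : G₁ ≃* G)
    (h : ∀ g n, φ₁ g n = φ (α g) n) : (N ⋊[φ₁] G₁) ≃* (N ⋊[φ] G) where
  toFun := SemidirectProduct.map (MonoidHom.id N) α.toMonoidHom (fun g => by ext n; simp [h])
  invFun := SemidirectProduct.map (MonoidHom.id N) α.symm.toMonoidHom (fun g => by
    ext n
    simp only [MonoidHom.comp_apply, MulEquiv.coe_toMonoidHom, MonoidHom.id_apply,
      MulEquiv.toMonoidHom_eq_coe, MonoidHom.coe_coe]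
    rw [h, MulEquiv.apply_symm_apply])
  left_inv x := by ext <;> simp [SemidirectProduct.map]
  right_inv x := by ext <;> simp [SemidirectProduct.map]
  map_mul' := map_mul _

/-- if the normal part is trivial, the semidirect product is the acting group -/
def sdTrivLeft {φ : G →* MulAut N} (hN : Subsingleton N) : (N ⋊[φ] G) ≃* G where
  toFun := rightHom
  invFun := inr
  left_inv x := by
    ext
    · exact Subsingleton.elim _ _
    · rfl
  right_inv g := rfl
  map_mul' := map_mul _

/-- if the acting part is trivial, the semidirect product is the normal group -/
noncomputable def sdTrivRight {φ : G →* MulAut N} (hG : Subsingleton G) : (N ⋊[φ] G) ≃* N :=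
  { (MulEquiv.ofBijective (inl : N →* N ⋊[φ] G)
      ⟨inl_injective, fun x => ⟨x.left, by
        ext
        · rfl
        · exact Subsingleton.elim _ _⟩⟩) with }.symm

end sd

section klein

lemma klein_equiv {P : Type*} [Group P] [Finite P] (hcard : Nat.card P = 4)
    (hexp : ∀ x : P, x ^ 2 = 1) :
    Nonempty (Multiplicative (ZMod 2 × ZMod 2) ≃* P) := by
  haveI : Fintype P := Fintype.ofFinite P
  have hc4 : Fintype.card P = 4 := by rwa [Nat.card_eq_fintype_card] at hcard
  haveI : Nontrivial P := Fintype.one_lt_card_iff_nontrivial.mp (by omega)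
  obtain ⟨a, ha⟩ := exists_ne (1 : P)
  have hinv : ∀ x : P, x⁻¹ = x := fun x =>
    inv_eq_of_mul_eq_one_right (by rw [← sq]; exact hexp x)
  have hcomm : ∀ x y : P, x * y = y * x := fun x y => by
    conv_lhs => rw [← hinv (x*y), mul_inv_rev, hinv x, hinv y]
  haveI : DecidableEq P := Classical.decEq P
  obtain ⟨b, hb1, hba⟩ : ∃ b : P, b ≠ 1 ∧ b ≠ a := by
    by_contra hcon
    push_neg at hcon
    have hsub : (Finset.univ : Finset P) ⊆ {1, a} := by
      intro x _
      rcases eq_or_ne x 1 with h | h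
      · simp [h]
      · simp [hcon x h]
    have := Finset.card_le_card hsub
    have h2 : ({1, a} : Finset P).card ≤ 2 := Finset.card_insert_le _ _ |>.trans (by simp)
    rw [Finset.card_univ, hc4] at this
    omega
  set f : Multiplicative (ZMod 2 × ZMod 2) →* P := MonoidHom.mk'
    (fun v => a ^ (Multiplicative.toAdd v).1.val * b ^ (Multiplicative.toAdd v).2.val)
    (by
      intro v w
      show a ^ ((Multiplicative.toAdd v).1 + (Multiplicative.toAdd w).1).val *
        b ^ ((Multiplicative.toAdd v).2 + (Multiplicative.toAdd w).2).val = _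
      rw [ZMod.val_add, ZMod.val_add, pow_mod_eq a (hexp a), pow_mod_eq b (hexp b),
        pow_add, pow_add]
      exact ((show Commute (b ^ (Multiplicative.toAdd v).2.val)
        (a ^ (Multiplicative.toAdd w).1.val) from hcomm _ _).mul_mul_mul_comm _ _).symm) with hf
  have hz2 : ∀ z : ZMod 2, z = 0 ∨ z = 1 := by decide
  have hab : a * b ≠ 1 := by
    intro h
    have h2 : a⁻¹ * (a * b) = a⁻¹ := by rw [h, mul_one]
    rw [inv_mul_cancel_left, hinv] at h2
    exact hba h2
  have hinj : Function.Injective f := by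
    rw [injective_iff_map_eq_one]
    intro v hv
    rw [hf] at hv
    simp only [MonoidHom.mk'_apply] at hv
    have hv' : v = Multiplicative.ofAdd
        ((Multiplicative.toAdd v).1, (Multiplicative.toAdd v).2) := rfl
    rcases hz2 (Multiplicative.toAdd v).1 with hi | hi <;>
      rcases hz2 (Multiplicative.toAdd v).2 with hj | hj <;>
      rw [hi, hj] at hv hv' <;> rw [hv'] <;>
      simp only [ZMod.val_zero, ZMod.val_one, pow_zero, pow_one, one_mul, mul_one] at hv
    · rfl
    · exact absurd hv hb1
    · exact absurd hv ha
    · exact absurd hv hab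
  have hbij : Function.Bijective f := by
    rw [Fintype.bijective_iff_injective_and_card]
    exact ⟨hinj, by rw [hc4]; rfl⟩
  exact ⟨MulEquiv.ofBijective f hbij⟩

end klein



abbrev V4 := Multiplicative (ZMod 2 × ZMod 2)

def vx : V4 := ofAdd (1, 0)
def vy : V4 := ofAdd (0, 1)

def kleinRot : MulAut V4 where
  toFun v := .ofAdd ((Multiplicative.toAdd v).2, (Multiplicative.toAdd v).1 + (Multiplicative.toAdd v).2)
  invFun v := .ofAdd ((Multiplicative.toAdd v).1 + (Multiplicative.toAdd v).2, (Multiplicative.toAdd v).1)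
  left_inv := by decide
  right_inv := by decide
  map_mul' := by decide

lemma kleinRot_cube : kleinRot ^ 3 = 1 := by
  rw [pow_succ, pow_succ, pow_one]
  exact MulEquiv.ext (by decide)

lemma klein_aut_classify (σ : MulAut V4) (h3 : σ ^ 3 = 1) :
    σ = 1 ∨ σ = kleinRot ∨ σ = kleinRot⁻¹ := by
  have h3' : ∀ v, σ (σ (σ v)) = v := by
    intro v
    have := DFunLike.congr_fun h3 v
    rwa [pow_succ, pow_succ, pow_one, MulAut.mul_apply, MulAut.mul_apply,
      MulAut.one_apply] at this
  have hmem : ∀ w : V4, w = 1 ∨ w = vx ∨ w = vy ∨ w = vx * vy := by decide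
  have ext2 : ∀ τ : MulAut V4, σ vx = τ vx → σ vy = τ vy → σ = τ := by
    intro τ hx hy
    ext1 v
    rcases hmem v with h | h | h | h <;> subst h <;>
      simp only [map_one, map_mul, hx, hy]
  have hxne : σ vx ≠ 1 := fun h => by simpa [vx] using (MulEquiv.map_eq_one_iff σ).mp h
  have hyne : σ vy ≠ 1 := fun h => by simpa [vy] using (MulEquiv.map_eq_one_iff σ).mp h
  have hxyne : σ vx ≠ σ vy := fun h => by simpa [vx, vy] using σ.injective h
  have hz : σ (vx * vy) = σ vx * σ vy := map_mul σ vx vy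
  rcases hmem (σ vx) with hx | hx | hx | hx <;> rcases hmem (σ vy) with hy | hy | hy | hy <;>
    first
      | exact absurd hx hxne
      | exact absurd hy hyne
      | exact absurd (hx.trans hy.symm) hxyne
      | skip
  -- remaining cases: (x,y) (x,z) (y,x) (y,z) (z,x) (z,y)
  · exact Or.inl (ext2 1 (by rw [hx]; rfl) (by rw [hy]; rfl))
  · -- σ x = x, σ y = xy : order 2 element, contradiction with h3'
    exfalso
    rw [hx, hy] at hz
    have hzy : σ (vx * vy) = vy := by rw [hz]; decide
    have := h3' vy
    rw [hy, hzy, hy] at this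
    revert this; decide
  · -- σ x = y, σ y = x
    exfalso
    rw [hx, hy] at hz
    have hzz : σ (vx * vy) = vx * vy := by rw [hz]; decide
    have := h3' vx
    rw [hx, hy, hx] at this
    revert this; decide
  · -- σ x = y, σ y = xy : kleinRot
    exact Or.inr (Or.inl (ext2 kleinRot (by rw [hx]; decide) (by rw [hy]; decide)))
  · -- σ x = xy, σ y = x : kleinRot⁻¹
    exact Or.inr (Or.inr (ext2 kleinRot⁻¹ (by rw [hx]; decide) (by rw [hy]; decide)))
  · -- σ x = xy, σ y = y : order 2
    exfalso
    rw [hx, hy] at hz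
    have hzx : σ (vx * vy) = vx := by rw [hz]; decide
    have := h3' vx
    rw [hx, hzx, hx] at this
    revert this; decide



def a4a : alternatingGroup (Fin 4) := ⟨Equiv.swap 0 1 * Equiv.swap 2 3, Equiv.Perm.mem_alternatingGroup.mpr (by decide)⟩
def a4b : alternatingGroup (Fin 4) := ⟨Equiv.swap 0 2 * Equiv.swap 1 3, Equiv.Perm.mem_alternatingGroup.mpr (by decide)⟩
def a4t : alternatingGroup (Fin 4) := ⟨Equiv.swap 0 2 * Equiv.swap 2 1, Equiv.Perm.mem_alternatingGroup.mpr (by decide)⟩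

lemma a4t_cube : a4t ^ 3 = 1 := by decide

def f4 : V4 →* alternatingGroup (Fin 4) :=
  MonoidHom.mk' (fun v => a4a ^ (Multiplicative.toAdd v).1.val *
    a4b ^ (Multiplicative.toAdd v).2.val) (by decide)

lemma card_A4 : Nat.card (alternatingGroup (Fin 4)) = 12 := by
  rw [Nat.card_eq_fintype_card]
  have h := two_mul_card_alternatingGroup (α := Fin 4)
  rw [Fintype.card_perm, Fintype.card_fin] at h
  rw [show Nat.factorial 4 = 24 from rfl] at h
  omega

lemma klein_sd_A4 (φ : Multiplicative (ZMod 3) →* MulAut V4) (hσ : φ (ofAdd 1) = kleinRot) :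
    Nonempty ((V4 ⋊[φ] Multiplicative (ZMod 3)) ≃* alternatingGroup (Fin 4)) := by
  have hφ : φ = zmodPowHom 3 kleinRot kleinRot_cube := by
    apply zmodHomExt
    rw [hσ, zmodPowHom_apply, ZMod.val_one, pow_one]
  subst hφ
  set g4 : Multiplicative (ZMod 3) →* alternatingGroup (Fin 4) :=
    zmodPowHom 3 a4t a4t_cube with hg4
  have hcompat : ∀ (z : ZMod 3) (v : V4),
      f4 ((kleinRot ^ z.val) v) = a4t ^ z.val * f4 v * (a4t ^ z.val)⁻¹ := by decide
  have h : ∀ z, f4.comp ((zmodPowHom 3 kleinRot kleinRot_cube) z).toMonoidHom =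
      (MulAut.conj (g4 z)).toMonoidHom.comp f4 := by
    intro z
    refine MonoidHom.ext fun v => ?_
    exact hcompat (Multiplicative.toAdd z) v
  set Φ := SemidirectProduct.lift f4 g4 h with hΦ
  have hker : ∀ (v : V4) (z : ZMod 3), f4 v * a4t ^ z.val = 1 → v = 1 ∧ z = 0 := by decide
  have hinj : Function.Injective Φ := by
    rw [injective_iff_map_eq_one]
    intro x hx
    have hx' : f4 x.left * g4 x.right = 1 := hx
    obtain ⟨h1, h2⟩ := hker x.left (Multiplicative.toAdd x.right) hx'
    refine SemidirectProduct.ext ?_ ?_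
    · exact h1
    · exact h2
  have hbij : Function.Bijective Φ := by
    rw [Nat.bijective_iff_injective_and_card]
    refine ⟨hinj, ?_⟩
    rw [sd_card, card_A4, Nat.card_eq_fintype_card, Nat.card_eq_fintype_card]
    rfl
  exact ⟨MulEquiv.ofBijective Φ hbij⟩

section dihedral
open DihedralGroup

lemma dihedral_sd (q : ℕ) [NeZero q]
    (φ : Multiplicative (ZMod 2) →* MulAut (Multiplicative (ZMod q)))
    (hσ : ∀ j : ZMod q, (φ (ofAdd 1)) (ofAdd j) = ofAdd (-j)) :
    Nonempty ((Multiplicative (ZMod q) ⋊[φ] Multiplicative (ZMod 2)) ≃* DihedralGroup q) := by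
  set f : Multiplicative (ZMod q) →* DihedralGroup q := MonoidHom.mk'
    (fun x => DihedralGroup.r (Multiplicative.toAdd x))
    (by intro a b
        show DihedralGroup.r (Multiplicative.toAdd a + Multiplicative.toAdd b) = _
        rw [r_mul_r]) with hfdef
  have hsr2 : DihedralGroup.sr (0 : ZMod q) ^ 2 = 1 := by
    rw [sq, sr_mul_sr, sub_zero, ← one_def]
  set g : Multiplicative (ZMod 2) →* DihedralGroup q := zmodPowHom 2 (sr 0) hsr2 with hgdef
  have hz2 : ∀ z : ZMod 2, z = 0 ∨ z = 1 := by decide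
  have hsr_inv : (DihedralGroup.sr (0 : ZMod q))⁻¹ = DihedralGroup.sr 0 :=
    inv_eq_of_mul_eq_one_right (by rw [sr_mul_sr, sub_zero, ← one_def])
  have h : ∀ z, f.comp ((φ z).toMonoidHom) = (MulAut.conj (g z)).toMonoidHom.comp f := by
    intro z
    refine MonoidHom.ext fun v => ?_
    show f ((φ z) v) = g z * f v * (g z)⁻¹
    rcases hz2 (Multiplicative.toAdd z) with hz | hz
    · have hz1 : z = 1 := by
        rw [← ofAdd_toAdd z, hz]; rfl
      rw [hz1, map_one, map_one, MulAut.one_apply, one_mul, inv_one, mul_one]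
    · have hz1 : z = ofAdd 1 := by rw [← ofAdd_toAdd z, hz]
      have hgz : g z = sr 0 := by
        rw [hz1, hgdef, zmodPowHom_apply, ZMod.val_one, pow_one]
      have hfv : (φ z) v = ofAdd (-(Multiplicative.toAdd v)) := by
        rw [hz1, ← ofAdd_toAdd v, hσ]
        simp only [toAdd_ofAdd]
      rw [hfv, hgz, hsr_inv]
      show DihedralGroup.r (Multiplicative.toAdd (ofAdd (-(Multiplicative.toAdd v)))) =
        sr 0 * DihedralGroup.r (Multiplicative.toAdd v) * sr 0
      simp only [toAdd_ofAdd]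
      rw [sr_mul_r, sr_mul_sr, zero_add, zero_sub]
  set Φ := SemidirectProduct.lift f g h with hΦ
  have hinj : Function.Injective Φ := by
    rw [injective_iff_map_eq_one]
    intro x hx
    have hx' : f x.left * g x.right = 1 := hx
    rcases hz2 (Multiplicative.toAdd x.right) with hz | hz
    · have hz1 : x.right = 1 := by rw [← ofAdd_toAdd x.right, hz]; rfl
      rw [hz1, map_one, mul_one, hfdef] at hx'
      have : DihedralGroup.r (Multiplicative.toAdd x.left) = DihedralGroup.r 0 := by
        rw [← one_def]; exact hx'
      have hleft : Multiplicative.toAdd x.left = 0 := by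
        injection this
      ext
      · rw [← ofAdd_toAdd x.left, hleft]; rfl
      · exact hz1
    · exfalso
      have hz1 : x.right = ofAdd 1 := by rw [← ofAdd_toAdd x.right, hz]
      have hgz : g x.right = sr 0 := by
        rw [hz1, hgdef, zmodPowHom_apply, ZMod.val_one, pow_one]
      rw [hgz, hfdef] at hx'
      have : sr (0 - Multiplicative.toAdd x.left) = (1 : DihedralGroup q) := by
        rw [← r_mul_sr]; exact hx'
      rw [one_def] at this
      exact absurd this (by intro h; cases h)
  have hbij : Function.Bijective Φ := by
    rw [Nat.bijective_iff_injective_and_card]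
    refine ⟨hinj, ?_⟩
    rw [sd_card, Nat.card_eq_fintype_card, Nat.card_eq_fintype_card,
      Nat.card_eq_fintype_card, DihedralGroup.card, Fintype.card_multiplicative,
      Fintype.card_multiplicative, ZMod.card, ZMod.card]
    ring
  exact ⟨MulEquiv.ofBijective Φ hbij⟩

end dihedral

section morehelp

lemma a5_order (g : alternatingGroup (Fin 5)) :
    orderOf g = 1 ∨ orderOf g = 2 ∨ orderOf g = 3 ∨ orderOf g = 5 := by
  rw [← Subgroup.orderOf_coe]
  exact perm5_order _ (Equiv.Perm.mem_alternatingGroup.mp g.2)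

lemma card_A5 : Nat.card (alternatingGroup (Fin 5)) = 60 := by
  rw [Nat.card_eq_fintype_card]
  have h := two_mul_card_alternatingGroup (α := Fin 5)
  rw [Fintype.card_perm, Fintype.card_fin] at h
  rw [show Nat.factorial 5 = 120 from rfl] at h
  omega

lemma card_mult_zmod (n : ℕ) : Nat.card (Multiplicative (ZMod n)) = n := by
  rw [Nat.card_congr Multiplicative.toAdd, Nat.card_zmod]

lemma primepow_dvd_60 {p n : ℕ} (hp : p.Prime) (h : p ^ n ∣ 60) :
    p ^ n = 1 ∨ p ^ n = 2 ∨ p ^ n = 3 ∨ p ^ n = 4 ∨ p ^ n = 5 := by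
  rcases Nat.eq_zero_or_pos n with hn | hn
  · subst hn; simp
  have hpd : p ∣ 60 := dvd_trans (dvd_pow_self p hn.ne') h
  have hple : p ≤ 60 := Nat.le_of_dvd (by norm_num) hpd
  have hp2 := hp.two_le
  have hp235 : p = 2 ∨ p = 3 ∨ p = 5 := by
    interval_cases p <;> revert hp hpd <;> decide
  rcases hp235 with rfl | rfl | rfl
  · have hn2 : n ≤ 2 := by
      by_contra hc
      push_neg at hc
      exact absurd (dvd_trans (pow_dvd_pow 2 hc) h) (by decide)
    interval_cases n <;> norm_num
  · have hn1 : n ≤ 1 := by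
      by_contra hc
      push_neg at hc
      exact absurd (dvd_trans (pow_dvd_pow 3 hc) h) (by decide)
    interval_cases n <;> norm_num
  · have hn1 : n ≤ 1 := by
      by_contra hc
      push_neg at hc
      exact absurd (dvd_trans (pow_dvd_pow 5 hc) h) (by decide)
    interval_cases n <;> norm_num

lemma phi_gen_pow {G : Type*} [Group G] {m : ℕ} [NeZero m]
    (φ : Multiplicative (ZMod m) →* G) : (φ (ofAdd 1)) ^ m = 1 := by
  rw [← map_pow]
  have h1 : (ofAdd (1 : ZMod m)) ^ m = 1 := by
    rw [← ofAdd_nsmul, nsmul_eq_mul, mul_one]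
    show Multiplicative.ofAdd ((m : ZMod m)) = 1
    rw [ZMod.natCast_self]
    rfl
  rw [h1, map_one]

lemma zmod_aut_pow_gen {q m : ℕ} [NeZero q] (σ : MulAut (Multiplicative (ZMod q)))
    (h : σ ^ m = 1) : (Multiplicative.toAdd (σ (ofAdd 1))) ^ m = 1 := by
  have h2 := mulAut_zmod_pow_apply σ m 1
  rw [h, MulAut.one_apply, one_mul] at h2
  have := congrArg Multiplicative.toAdd h2
  simpa using this.symm

lemma zmod2_aut_triv (σ : MulAut (Multiplicative (ZMod 2))) : σ = 1 := by
  apply mulAut_zmod_eq_one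
  have h : ∀ k : ZMod 2, k = 0 ∨ k = 1 := by decide
  rcases h (Multiplicative.toAdd (σ (ofAdd 1))) with h0 | h1
  · exfalso
    have : σ (ofAdd 1) = 1 := by
      rw [← ofAdd_toAdd (σ (ofAdd 1)), h0]; rfl
    have h2 := (MulEquiv.map_eq_one_iff σ).mp this
    revert h2; decide
  · exact h1

lemma klein_aut_pow5 (σ : MulAut V4) (h : σ ^ 5 = 1) : σ = 1 := by
  have hdvd5 : orderOf σ ∣ 5 := orderOf_dvd_of_pow_eq_one h
  have h24 : orderOf σ ∣ 24 := by
    have hinj : Function.Injective (MulAut.toPerm V4) := by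
      intro a b hab
      ext1 v
      exact congrFun (congrArg DFunLike.coe hab) v
    rw [← orderOf_injective (MulAut.toPerm V4) hinj σ]
    have hd := orderOf_dvd_card (G := Equiv.Perm V4) (x := MulAut.toPerm V4 σ)
    rwa [Fintype.card_perm, show Fintype.card V4 = 4 from rfl,
      show Nat.factorial 4 = 24 from rfl] at hd
  have h1 : orderOf σ ∣ 1 := Nat.dvd_gcd hdvd5 h24
  exact orderOf_eq_one_iff.mp (Nat.dvd_one.mp h1)

lemma sd_order_of_triv {N G : Type*} [Group N] [Group G] {φ : G →* MulAut N} (hφ : φ = 1)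
    (a : N) (b : G) (hco : Nat.Coprime (orderOf a) (orderOf b)) :
    orderOf (SemidirectProduct.inl a * SemidirectProduct.inr b : N ⋊[φ] G)
      = orderOf a * orderOf b := by
  have hc : Commute (SemidirectProduct.inl a : N ⋊[φ] G) (SemidirectProduct.inr b) := by
    show _ = _
    ext
    · simp [SemidirectProduct.mul_left, hφ]
    · simp [SemidirectProduct.mul_right]
  rw [hc.orderOf_mul_eq_mul_orderOf_of_coprime
    (by rwa [orderOf_injective _ SemidirectProduct.inl_injective,
      orderOf_injective _ SemidirectProduct.inr_injective]),
    orderOf_injective _ SemidirectProduct.inl_injective,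
    orderOf_injective _ SemidirectProduct.inr_injective]

/-- transport a semidirect product along an iso of the normal part -/
noncomputable def sdTransport {P C G : Type*} [Group P] [Group C] [Group G]
    (φ : G →* MulAut P) (e : C ≃* P) :
    (P ⋊[φ] G) ≃* (C ⋊[(MulAut.congr e.symm).toMonoidHom.comp φ] G) :=
  sdCongrLeft e.symm (fun g n => by simp [MulAut.congr])

lemma sdTransport_phi_apply {P C G : Type*} [Group P] [Group C] [Group G]
    (φ : G →* MulAut P) (e : C ≃* P) (g : G) (c : C) :
    ((MulAut.congr e.symm).toMonoidHom.comp φ) g c = e.symm (φ g (e c)) := by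
  simp [MulAut.congr]

end morehelp

lemma zmod3_sqrt1 : ∀ t : ZMod 3, t ^ 2 = 1 → t = 1 ∨ t = -1 := by decide
lemma zmod3_pow5 : ∀ t : ZMod 3, t ^ 5 = 1 → t = 1 := by decide
lemma zmod5_sqrt1 : ∀ t : ZMod 5, t ^ 2 = 1 → t = 1 ∨ t = -1 := by decide
lemma zmod5_pow3 : ∀ t : ZMod 5, t ^ 3 = 1 → t = 1 := by decide


open SemidirectProduct

/-- Every subgroup of `A₅` of the form `P ⋊ ℤ/m` with `P` a `p`-group for some prime `p`
and `p ∤ m` is isomorphic to one of: the trivial group, `ℤ/2`, `ℤ/3`, `ℤ/5`,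
`ℤ/2 × ℤ/2`, the dihedral group `D₃` of order 6, the dihedral group `D₅` of order 10,
or `A₄`. -/
theorem cyclic_by_p_subgroups_of_A5 (H : Subgroup (alternatingGroup (Fin 5)))
    (hH : ∃ (p m : ℕ), p.Prime ∧ ¬ p ∣ m ∧
      ∃ (P : Type) (_ : Group P) (_ : IsPGroup p P)
        (φ : Multiplicative (ZMod m) →* MulAut P),
        Nonempty (H ≃* (P ⋊[φ] Multiplicative (ZMod m)))) :
    Nonempty (H ≃* Multiplicative (ZMod 1)) ∨
    Nonempty (H ≃* Multiplicative (ZMod 2)) ∨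
    Nonempty (H ≃* Multiplicative (ZMod 3)) ∨
    Nonempty (H ≃* Multiplicative (ZMod 5)) ∨
    Nonempty (H ≃* Multiplicative (ZMod 2 × ZMod 2)) ∨
    Nonempty (H ≃* DihedralGroup 3) ∨
    Nonempty (H ≃* DihedralGroup 5) ∨
    Nonempty (H ≃* alternatingGroup (Fin 4)) := by
  obtain ⟨p, m, hp, hpm, P, _, hPg, φ, ⟨e⟩⟩ := hH
  haveI hfp : Fact p.Prime := ⟨hp⟩
  have hm0 : m ≠ 0 := fun h => hpm (h ▸ dvd_zero p)
  haveI : NeZero m := ⟨hm0⟩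
  haveI hfin : Finite (P ⋊[φ] Multiplicative (ZMod m)) := Finite.of_equiv _ e.toEquiv
  haveI : Finite P := Finite.of_injective _ (SemidirectProduct.inl_injective
    (φ := φ) (G := Multiplicative (ZMod m)))
  have ordIso : ∀ {G : Type} [Group G], (H ≃* G) → ∀ x : G,
      orderOf x = 1 ∨ orderOf x = 2 ∨ orderOf x = 3 ∨ orderOf x = 5 := by
    intro G _ E x
    rw [← orderOf_injective E.symm.toMonoidHom E.symm.injective x, ← Subgroup.orderOf_coe]
    exact a5_order _
  have hcard : Nat.card P * m ∣ 60 := by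
    have h1 := H.card_subgroup_dvd_card
    rw [card_A5] at h1
    rwa [Nat.card_congr e.toEquiv, sd_card, card_mult_zmod] at h1
  have hm1235 : m = 1 ∨ m = 2 ∨ m = 3 ∨ m = 5 := by
    have h1 : orderOf (inr (ofAdd (1 : ZMod m)) : P ⋊[φ] Multiplicative (ZMod m)) = m := by
      rw [orderOf_injective _ SemidirectProduct.inr_injective, orderOf_ofAdd_eq_addOrderOf,
        ZMod.addOrderOf_one]
    have h2 := ordIso e (inr (ofAdd (1 : ZMod m)))
    rw [h1] at h2
    exact h2
  have hexp : ∀ x : P, x ^ p = 1 := by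
    intro x
    obtain ⟨k, hk⟩ := hPg x
    have ho : orderOf x ∣ p ^ k := orderOf_dvd_of_pow_eq_one hk
    obtain ⟨j, hj, hoj⟩ := (Nat.dvd_prime_pow hp).mp ho
    have h2 : orderOf (inl x : P ⋊[φ] Multiplicative (ZMod m)) = orderOf x :=
      orderOf_injective _ SemidirectProduct.inl_injective x
    have h3 := ordIso e (inl x)
    rw [h2, hoj] at h3
    have key : ∀ t : ℕ, t.Prime → p ^ j = t → x ^ p = 1 := by
      intro t ht hjt
      rcases Nat.eq_zero_or_pos j with hj0 | hj0
      · rw [hj0, pow_zero] at hjt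
        exact absurd hjt.symm ht.one_lt.ne'
      · have hpp : p ∣ p ^ j := dvd_pow_self p hj0.ne'
        have hpt : p = t := (Nat.prime_dvd_prime_iff_eq hp ht).mp (hjt ▸ hpp)
        rw [hpt, ← hjt, ← hoj]
        exact pow_orderOf_eq_one x
    rcases h3 with h|h|h|h
    · have h4 : orderOf x = 1 := hoj.trans h
      rw [orderOf_eq_one_iff] at h4
      rw [h4, one_pow]
    · exact key 2 Nat.prime_two h
    · exact key 3 Nat.prime_three h
    · exact key 5 (by norm_num) h
  obtain ⟨n, hn⟩ := IsPGroup.exists_card_eq hPg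
  have hPdvd : Nat.card P ∣ 60 := dvd_trans (dvd_mul_right _ m) hcard
  have hPval := primepow_dvd_60 hp (hn ▸ hPdvd)
  rw [← hn] at hPval
  have hpeq : ∀ t : ℕ, t.Prime → Nat.card P = t → p = t := by
    intro t ht hct
    have h2 : p ^ n = t := hn ▸ hct
    rcases Nat.eq_zero_or_pos n with hn0 | hn0
    · rw [hn0, pow_zero] at h2
      exact absurd h2.symm ht.one_lt.ne'
    · exact (Nat.prime_dvd_prime_iff_eq hp ht).mp (h2 ▸ dvd_pow_self p hn0.ne')
  haveI : Subsingleton (Multiplicative (ZMod 1)) :=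
    ⟨fun a b => congrArg ofAdd (Subsingleton.elim _ _)⟩
  have hoZ : ∀ (r : ℕ) [NeZero r], orderOf (ofAdd (1 : ZMod r)) = r := by
    intro r _
    rw [orderOf_ofAdd_eq_addOrderOf, ZMod.addOrderOf_one]
  rcases hPval with hPc | hPc | hPc | hPc | hPc
  · -- |P| = 1
    haveI : Subsingleton P := (Nat.card_eq_one_iff_unique.mp hPc).1
    have E : H ≃* Multiplicative (ZMod m) := e.trans (sdTrivLeft ‹_›)
    rcases hm1235 with rfl | rfl | rfl | rfl
    · exact Or.inl ⟨E⟩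
    · exact Or.inr (Or.inl ⟨E⟩)
    · exact Or.inr (Or.inr (Or.inl ⟨E⟩))
    · exact Or.inr (Or.inr (Or.inr (Or.inl ⟨E⟩)))
  · -- |P| = 2
    have hp2 : p = 2 := hpeq 2 Nat.prime_two hPc
    haveI : Fact (Nat.Prime 2) := ⟨Nat.prime_two⟩
    haveI hcy : IsCyclic P := isCyclic_of_prime_card (p := 2) hPc
    haveI hcy2 : IsCyclic (Multiplicative (ZMod 2)) :=
      isCyclic_of_prime_card (p := 2) (card_mult_zmod 2)
    have eC : Multiplicative (ZMod 2) ≃* P :=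
      mulEquivOfCyclicCardEq (by rw [card_mult_zmod, hPc])
    set φ' := (MulAut.congr eC.symm).toMonoidHom.comp φ with hφ'
    have eH : H ≃* (Multiplicative (ZMod 2) ⋊[φ'] Multiplicative (ZMod m)) :=
      e.trans (sdTransport φ eC)
    have hφtriv : φ' = 1 := MonoidHom.ext fun z => zmod2_aut_triv _
    have hm135 : m = 1 ∨ m = 3 ∨ m = 5 := by
      rcases hm1235 with h|h|h|h
      · exact Or.inl h
      · exfalso; rw [hp2, h] at hpm; exact hpm dvd_rfl
      · exact Or.inr (Or.inl h)
      · exact Or.inr (Or.inr h)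
    rcases hm135 with rfl | rfl | rfl
    · exact Or.inr (Or.inl ⟨eH.trans (sdTrivRight ‹_›)⟩)
    · exfalso
      have h1 := sd_order_of_triv hφtriv (ofAdd (1 : ZMod 2)) (ofAdd (1 : ZMod 3))
        (by rw [hoZ, hoZ]; decide)
      rw [hoZ, hoZ] at h1
      have h2 := ordIso eH (inl (ofAdd 1) * inr (ofAdd 1))
      rw [h1] at h2
      omega
    · exfalso
      have h1 := sd_order_of_triv hφtriv (ofAdd (1 : ZMod 2)) (ofAdd (1 : ZMod 5))
        (by rw [hoZ, hoZ]; decide)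
      rw [hoZ, hoZ] at h1
      have h2 := ordIso eH (inl (ofAdd 1) * inr (ofAdd 1))
      rw [h1] at h2
      omega
  · -- |P| = 3
    have hp3 : p = 3 := hpeq 3 Nat.prime_three hPc
    haveI : Fact (Nat.Prime 3) := ⟨Nat.prime_three⟩
    haveI hcy : IsCyclic P := isCyclic_of_prime_card (p := 3) hPc
    haveI hcy2 : IsCyclic (Multiplicative (ZMod 3)) :=
      isCyclic_of_prime_card (p := 3) (card_mult_zmod 3)
    have eC : Multiplicative (ZMod 3) ≃* P :=
      mulEquivOfCyclicCardEq (by rw [card_mult_zmod, hPc])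
    set φ' := (MulAut.congr eC.symm).toMonoidHom.comp φ with hφ'
    have eH : H ≃* (Multiplicative (ZMod 3) ⋊[φ'] Multiplicative (ZMod m)) :=
      e.trans (sdTransport φ eC)
    have hm125 : m = 1 ∨ m = 2 ∨ m = 5 := by
      rcases hm1235 with h|h|h|h
      · exact Or.inl h
      · exact Or.inr (Or.inl h)
      · exfalso; rw [hp3, h] at hpm; exact hpm dvd_rfl
      · exact Or.inr (Or.inr h)
    have hσm : (φ' (ofAdd 1)) ^ m = 1 := phi_gen_pow φ'
    have hkm := zmod_aut_pow_gen _ hσm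
    rcases hm125 with rfl | rfl | rfl
    · exact Or.inr (Or.inr (Or.inl ⟨eH.trans (sdTrivRight ‹_›)⟩))
    · rcases zmod3_sqrt1 _ hkm with h1 | h1
      · exfalso
        have hσ1 : φ' (ofAdd 1) = 1 := mulAut_zmod_eq_one _ h1
        have hφtriv : φ' = 1 := zmodHomTriv hσ1
        have h2 := sd_order_of_triv hφtriv (ofAdd (1 : ZMod 3)) (ofAdd (1 : ZMod 2))
          (by rw [hoZ, hoZ]; decide)
        rw [hoZ, hoZ] at h2
        have h3 := ordIso eH (inl (ofAdd 1) * inr (ofAdd 1))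
        rw [h2] at h3
        omega
      · have hσinv : ∀ j : ZMod 3, (φ' (ofAdd 1)) (ofAdd j) = ofAdd (-j) := by
          intro j
          rw [mulAut_zmod_apply, h1, mul_neg_one]
        obtain ⟨E⟩ := dihedral_sd 3 φ' hσinv
        exact Or.inr (Or.inr (Or.inr (Or.inr (Or.inr (Or.inl ⟨eH.trans E⟩)))))
    · exfalso
      have hσ1 : φ' (ofAdd 1) = 1 := mulAut_zmod_eq_one _ (zmod3_pow5 _ hkm)
      have hφtriv : φ' = 1 := zmodHomTriv hσ1
      have h2 := sd_order_of_triv hφtriv (ofAdd (1 : ZMod 3)) (ofAdd (1 : ZMod 5))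
        (by rw [hoZ, hoZ]; decide)
      rw [hoZ, hoZ] at h2
      have h3 := ordIso eH (inl (ofAdd 1) * inr (ofAdd 1))
      rw [h2] at h3
      omega
  · -- |P| = 4
    have hp2 : p = 2 := by
      have h2 : p ^ n = 4 := hn ▸ hPc
      have hn0 : n ≠ 0 := by
        rintro rfl
        rw [pow_zero] at h2
        omega
      have hdp : p ∣ 4 := h2 ▸ dvd_pow_self p hn0
      have hdp2 : p ∣ 2 ^ 2 := by rwa [show (4:ℕ) = 2^2 from rfl] at hdp
      exact (Nat.prime_dvd_prime_iff_eq hp Nat.prime_two).mp (hp.dvd_of_dvd_pow hdp2)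
    have hexp2 : ∀ x : P, x ^ 2 = 1 := by
      intro x
      have := hexp x
      rwa [hp2] at this
    obtain ⟨eC⟩ := klein_equiv hPc hexp2
    set φ' := (MulAut.congr eC.symm).toMonoidHom.comp φ with hφ'
    have eH : H ≃* (V4 ⋊[φ'] Multiplicative (ZMod m)) :=
      e.trans (sdTransport φ eC)
    have hm135 : m = 1 ∨ m = 3 ∨ m = 5 := by
      rcases hm1235 with h|h|h|h
      · exact Or.inl h
      · exfalso; rw [hp2, h] at hpm; exact hpm dvd_rfl
      · exact Or.inr (Or.inl h)
      · exact Or.inr (Or.inr h)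
    have hovx : orderOf (vx : V4) = 2 := orderOf_eq_prime (by decide) (by decide)
    rcases hm135 with rfl | rfl | rfl
    · exact Or.inr (Or.inr (Or.inr (Or.inr (Or.inl ⟨eH.trans (sdTrivRight ‹_›)⟩))))
    · have hσ3 : (φ' (ofAdd 1)) ^ 3 = 1 := phi_gen_pow φ'
      rcases klein_aut_classify _ hσ3 with h1 | h1 | h1
      · exfalso
        have hφtriv : φ' = 1 := zmodHomTriv h1
        have h2 := sd_order_of_triv hφtriv (vx : V4) (ofAdd (1 : ZMod 3))
          (by rw [hovx, hoZ]; decide)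
        rw [hovx, hoZ] at h2
        have h3 := ordIso eH (inl vx * inr (ofAdd 1))
        rw [h2] at h3
        omega
      · obtain ⟨E⟩ := klein_sd_A4 φ' h1
        exact Or.inr (Or.inr (Or.inr (Or.inr (Or.inr (Or.inr (Or.inr ⟨eH.trans E⟩))))))
      · set α := MulEquiv.inv (Multiplicative (ZMod 3)) with hα
        set φ'' := φ'.comp α.toMonoidHom with hφ''
        have h2 : φ'' (ofAdd 1) = kleinRot := by
          show φ' (α (ofAdd 1)) = kleinRot
          have hα1 : α (ofAdd (1 : ZMod 3)) = (ofAdd (1 : ZMod 3))⁻¹ := rfl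
          rw [hα1, map_inv, h1, inv_inv]
        obtain ⟨E2⟩ := klein_sd_A4 φ'' h2
        have E1 : (V4 ⋊[φ''] Multiplicative (ZMod 3)) ≃*
            (V4 ⋊[φ'] Multiplicative (ZMod 3)) := sdCongrRight α (fun g n => rfl)
        exact Or.inr (Or.inr (Or.inr (Or.inr (Or.inr (Or.inr (Or.inr
          ⟨eH.trans (E1.symm.trans E2)⟩))))))
    · exfalso
      have hσ5 : (φ' (ofAdd 1)) ^ 5 = 1 := phi_gen_pow φ'
      have hσ1 : φ' (ofAdd 1) = 1 := klein_aut_pow5 _ hσ5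
      have hφtriv : φ' = 1 := zmodHomTriv hσ1
      have h2 := sd_order_of_triv hφtriv (vx : V4) (ofAdd (1 : ZMod 5))
        (by rw [hovx, hoZ]; decide)
      rw [hovx, hoZ] at h2
      have h3 := ordIso eH (inl vx * inr (ofAdd 1))
      rw [h2] at h3
      omega
  · -- |P| = 5
    have hp5 : p = 5 := hpeq 5 (by norm_num) hPc
    haveI : Fact (Nat.Prime 5) := ⟨by norm_num⟩
    haveI hcy : IsCyclic P := isCyclic_of_prime_card (p := 5) hPc
    haveI hcy2 : IsCyclic (Multiplicative (ZMod 5)) :=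
      isCyclic_of_prime_card (p := 5) (card_mult_zmod 5)
    have eC : Multiplicative (ZMod 5) ≃* P :=
      mulEquivOfCyclicCardEq (by rw [card_mult_zmod, hPc])
    set φ' := (MulAut.congr eC.symm).toMonoidHom.comp φ with hφ'
    have eH : H ≃* (Multiplicative (ZMod 5) ⋊[φ'] Multiplicative (ZMod m)) :=
      e.trans (sdTransport φ eC)
    have hm123 : m = 1 ∨ m = 2 ∨ m = 3 := by
      rcases hm1235 with h|h|h|h
      · exact Or.inl h
      · exact Or.inr (Or.inl h)
      · exact Or.inr (Or.inr h)
      · exfalso; rw [hp5, h] at hpm; exact hpm dvd_rfl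
    have hσm : (φ' (ofAdd 1)) ^ m = 1 := phi_gen_pow φ'
    have hkm := zmod_aut_pow_gen _ hσm
    rcases hm123 with rfl | rfl | rfl
    · exact Or.inr (Or.inr (Or.inr (Or.inl ⟨eH.trans (sdTrivRight ‹_›)⟩)))
    · rcases zmod5_sqrt1 _ hkm with h1 | h1
      · exfalso
        have hσ1 : φ' (ofAdd 1) = 1 := mulAut_zmod_eq_one _ h1
        have hφtriv : φ' = 1 := zmodHomTriv hσ1
        have h2 := sd_order_of_triv hφtriv (ofAdd (1 : ZMod 5)) (ofAdd (1 : ZMod 2))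
          (by rw [hoZ, hoZ]; decide)
        rw [hoZ, hoZ] at h2
        have h3 := ordIso eH (inl (ofAdd 1) * inr (ofAdd 1))
        rw [h2] at h3
        omega
      · have hσinv : ∀ j : ZMod 5, (φ' (ofAdd 1)) (ofAdd j) = ofAdd (-j) := by
          intro j
          rw [mulAut_zmod_apply, h1, mul_neg_one]
        obtain ⟨E⟩ := dihedral_sd 5 φ' hσinv
        exact Or.inr (Or.inr (Or.inr (Or.inr (Or.inr (Or.inr (Or.inl ⟨eH.trans E⟩))))))
    · exfalso
      have hσ1 : φ' (ofAdd 1) = 1 := mulAut_zmod_eq_one _ (zmod5_pow3 _ hkm)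
      have hφtriv : φ' = 1 := zmodHomTriv hσ1
      have h2 := sd_order_of_triv hφtriv (ofAdd (1 : ZMod 5)) (ofAdd (1 : ZMod 3))
        (by rw [hoZ, hoZ]; decide)
      rw [hoZ, hoZ] at h2
      have h3 := ordIso eH (inl (ofAdd 1) * inr (ofAdd 1))
      rw [h2] at h3
      omega
end

section
/- Let σ be the k-automorphism of k((t)) sending t to ζt for a fixed primitive cube root of unity ζ ∈ k, char k = 2. If a ∈ t⁻¹k[t⁻¹] has only odd-degree terms in t⁻¹ and no terms of degree divisible by 3, then a + σ(a) + σ²(a) = 0 and the 𝔽₂-vector space spanned by the images of a, σ(a), σ²(a) in k((t))/(F−1)k((t)) has dimension exactly 2, provided a ≠ 0. -/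
open HahnSeries Polynomial

namespace ConjAux

variable {k : Type*} [Field k]

lemma algMap (c : k) :
    algebraMap k (LaurentSeries k) c = HahnSeries.single (0:ℤ) c := by
  rw [show algebraMap k (LaurentSeries k) c
      = HahnSeries.ofPowerSeries ℤ k (PowerSeries.C c) from rfl,
    HahnSeries.ofPowerSeries_C, HahnSeries.C_apply]

lemma coeff_sum {α : Type*} (s : Finset α) (f : α → LaurentSeries k) (m : ℤ) :
    (∑ i ∈ s, f i).coeff m = ∑ i ∈ s, (f i).coeff m := by
  classical
  induction s using Finset.induction_on with
  | empty => simp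
  | insert _ _ h ih => rw [Finset.sum_insert h, Finset.sum_insert h, HahnSeries.coeff_add, ih]

noncomputable def ev (u : k) (q : k[X]) : LaurentSeries k :=
  Polynomial.aeval (HahnSeries.single (-1 : ℤ) u) q

lemma ev_eq_sum (u : k) (q : k[X]) :
    ev u q = ∑ n ∈ q.support, HahnSeries.single (-(n : ℤ)) (q.coeff n * u ^ n) := by
  rw [ev, Polynomial.aeval_def, Polynomial.eval₂_eq_sum, Polynomial.sum_def]
  refine Finset.sum_congr rfl fun n _ => ?_
  rw [HahnSeries.single_pow, algMap, HahnSeries.single_mul_single]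
  congr 1
  simp

lemma ev_coeff_neg (u : k) (q : k[X]) (n : ℕ) :
    (ev u q).coeff (-(n : ℤ)) = q.coeff n * u ^ n := by
  rw [ev_eq_sum, coeff_sum]
  rw [Finset.sum_congr rfl (fun j _ => ?_), Finset.sum_ite_eq' q.support n
    (fun j => q.coeff j * u ^ j)]
  · by_cases h : n ∈ q.support
    · simp [h]
    · simp only [h, if_false]
      rw [Polynomial.notMem_support_iff.mp h, zero_mul]
  · rw [HahnSeries.coeff_single]
    congr 1
    simp [eq_comm]

lemma ev_coeff_pos (u : k) (q : k[X]) (m : ℤ) (hm : 0 < m) :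
    (ev u q).coeff m = 0 := by
  rw [ev_eq_sum, coeff_sum]
  refine Finset.sum_eq_zero fun j _ => ?_
  rw [HahnSeries.coeff_single]
  have : m ≠ -(j:ℤ) := by omega
  simp [this]

/-- Support of `ev u q` consists of negative odd integers when `q` has only
odd-degree terms. -/
lemma ev_supp (u : k) (q : k[X]) (hq : ∀ n, q.coeff n ≠ 0 → Odd n)
    (m : ℤ) (h : (ev u q).coeff m ≠ 0) : Odd m ∧ m < 0 := by
  rcases lt_or_ge 0 m with hm | hm
  · exact absurd (ev_coeff_pos u q m hm) h
  · have hm' : m = -(((-m).toNat : ℤ)) := by omega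
    rw [hm', ev_coeff_neg] at h
    have hc : q.coeff (-m).toNat ≠ 0 := fun h0 => h (by rw [h0, zero_mul])
    obtain ⟨c, hc'⟩ := hq _ hc
    have hx : ((-m).toNat : ℤ) = 2 * c + 1 := by exact_mod_cast hc'
    constructor
    · exact ⟨-(c+1), by omega⟩
    · omega

/-- A nonzero element supported on negative odd exponents is not of the form
`f ^ 2 - f`. -/
lemma not_sq_sub (x : LaurentSeries k) (hx : x ≠ 0)
    (hs : ∀ m : ℤ, x.coeff m ≠ 0 → Odd m ∧ m < 0) (f : LaurentSeries k) :
    x ≠ f ^ 2 - f := by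
  intro h
  by_cases hf : f = 0
  · rw [hf] at h; simp at h; exact hx h
  · have hfo : f.coeff f.order ≠ 0 := HahnSeries.coeff_order_eq_zero.not.mpr hf
    rcases lt_or_ge f.order 0 with hd | hd
    · -- leading term of f^2 has even exponent 2d < 0
      have h2 : x.coeff (f.order + f.order) ≠ 0 := by
        rw [h, HahnSeries.coeff_sub, pow_two, HahnSeries.coeff_mul_order_add_order f f,
          HahnSeries.coeff_eq_zero_of_lt_order (by omega : f.order + f.order < f.order),
          sub_zero]
        exact mul_ne_zero (HahnSeries.leadingCoeff_ne_zero.mpr hf) (HahnSeries.leadingCoeff_ne_zero.mpr hf)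
      obtain ⟨ho, -⟩ := hs _ h2
      obtain ⟨c, hc⟩ := ho
      omega
    · -- f^2 - f has no negative exponents
      obtain ⟨m, hm⟩ := HahnSeries.support_nonempty_iff.mpr hx
      obtain ⟨-, hmneg⟩ := hs m hm
      refine hm ?_
      rw [h, HahnSeries.coeff_sub,
        HahnSeries.coeff_eq_zero_of_lt_order (lt_of_lt_of_le hmneg hd),
        HahnSeries.coeff_eq_zero_of_lt_order (x := f ^ 2) ?_, sub_zero]
      rw [pow_two, HahnSeries.order_mul hf hf]
      omega

/-- In a quotient of an elementary abelian 2-group, three elements `A`, `B`,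
`A + B` with all of `A`, `B`, `A + B` nonzero generate a subgroup of order 4. -/
lemma card_four {G : Type*} [AddCommGroup G] (H : AddSubgroup G)
    (h2 : ∀ x : G, x + x = 0) (a b c : G)
    (hc : c = a + b) (haH : a ∉ H) (hbH : b ∉ H) (habH : a + b ∉ H) :
    Nat.card (AddSubgroup.closure
      ({QuotientAddGroup.mk a, QuotientAddGroup.mk b,
        QuotientAddGroup.mk c} : Set (G ⧸ H))) = 4 := by
  set Q := G ⧸ H
  set A : Q := QuotientAddGroup.mk a with hAdef
  set B : Q := QuotientAddGroup.mk b with hBdef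
  have hCab : (QuotientAddGroup.mk c : Q) = A + B := by rw [hc]; rfl
  have hq2 : ∀ q : Q, q + q = 0 := by
    intro q
    induction q using QuotientAddGroup.induction_on with
    | H x =>
      have : ((QuotientAddGroup.mk (x + x) : Q)) = 0 := by rw [h2 x]; rfl
      rw [← this]; rfl
  have hA0 : A ≠ 0 := fun h => haH ((QuotientAddGroup.eq_zero_iff a).mp h)
  have hB0 : B ≠ 0 := fun h => hbH ((QuotientAddGroup.eq_zero_iff b).mp h)
  have hAB0 : A + B ≠ 0 := by
    intro h
    have : ((QuotientAddGroup.mk (a + b) : Q)) = 0 := by rw [← h]; rfl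
    exact habH ((QuotientAddGroup.eq_zero_iff (a + b)).mp this)
  have hABne : A ≠ B := fun h => hAB0 (by rw [h]; exact hq2 B)
  have hAABne : A ≠ A + B := fun h => hB0 (by
    have h' := hq2 A
    calc B = A + (A + B) := by rw [← add_assoc, h', zero_add]
    _ = A + A := by rw [← h]
    _ = 0 := h')
  have hBABne : B ≠ A + B := fun h => hA0 (by
    have h' := hq2 B
    calc A = (A + B) + B := by rw [add_assoc, h', add_zero]
    _ = B + B := by rw [← h]
    _ = 0 := h')
  have memlem : ∀ u v : Q, u + (u + v) = v := fun u v => by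
    rw [← add_assoc, hq2, zero_add]
  let S : AddSubgroup Q :=
  { carrier := {0, A, B, A + B}
    zero_mem' := by left; rfl
    add_mem' := by
      intro x y hx hy
      simp only [Set.mem_insert_iff, Set.mem_singleton_iff] at hx hy ⊢
      rcases hx with rfl | rfl | rfl | rfl <;> rcases hy with rfl | rfl | rfl | rfl <;>
        (try simp only [zero_add, add_zero, eq_self_iff_true, true_or, or_true]) <;>
      first
        | (left; exact hq2 _)
        | (right; right; right; rfl)
        | (right; right; right; exact add_comm B A)
        | (right; right; left; exact memlem A B)
        | (right; left; exact (by rw [add_comm A B]; exact memlem B A))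
        | (right; right; left; exact (by rw [add_comm (A + B) A]; exact memlem A B))
        | (right; left; exact (by rw [add_assoc, hq2 B, add_zero]))
    neg_mem' := by
      intro x hx
      rwa [neg_eq_of_add_eq_zero_left (hq2 x)] }
  have hclosure : AddSubgroup.closure
      ({A, B, QuotientAddGroup.mk c} : Set Q) = S := by
    apply le_antisymm
    · rw [AddSubgroup.closure_le]
      intro x hx
      rcases hx with rfl | rfl | rfl
      · right; left; rfl
      · right; right; left; rfl
      · rw [hCab]; right; right; right; rfl
    · intro x hx
      rcases hx with rfl | rfl | rfl | rfl
      · exact zero_mem _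
      · exact AddSubgroup.subset_closure (by left; rfl)
      · exact AddSubgroup.subset_closure (by right; left; rfl)
      · exact add_mem (AddSubgroup.subset_closure (by left; rfl))
          (AddSubgroup.subset_closure (by right; left; rfl))
  calc Nat.card (AddSubgroup.closure ({A, B, QuotientAddGroup.mk c} : Set Q))
      = Nat.card (({0, A, B, A + B} : Set Q)) := by rw [hclosure]; rfl
    _ = ({0, A, B, A + B} : Set Q).ncard := Nat.card_coe_set_eq _
    _ = 4 := by
        rw [Set.ncard_insert_of_notMem (by
            simp only [Set.mem_insert_iff, Set.mem_singleton_iff]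
            push_neg
            exact ⟨Ne.symm hA0, Ne.symm hB0, Ne.symm hAB0⟩),
          Set.ncard_insert_of_notMem (by
            simp only [Set.mem_insert_iff, Set.mem_singleton_iff]
            push_neg
            exact ⟨hABne, hAABne⟩),
          Set.ncard_insert_of_notMem (by
            simp only [Set.mem_singleton_iff]
            exact hBABne),
          Set.ncard_singleton]

end ConjAux

open ConjAux
/-- Let `σ` be the `k`-automorphism of `k((t))` with `σ(t) = ζt` for a primitive cube
root of unity `ζ ∈ k`, `char k = 2`.  If `a ∈ t⁻¹k[t⁻¹]` is nonzero with only
odd-degree terms and no terms of degree divisible by 3, then `a + σ(a) + σ²(a) = 0`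
and the `𝔽₂`-span of the images of `a, σ(a), σ²(a)` in `k((t))/(F−1)k((t))` has
dimension exactly 2 (the subgroup they generate has order 4). -/
theorem conjugates_span_dimension_two
    (k : Type*) [Field k] [IsAlgClosed k] [CharP k 2]
    (ζ : k) (hζ : IsPrimitiveRoot ζ 3)
    (σ : LaurentSeries k ≃ₐ[k] LaurentSeries k)
    (hσ : σ (HahnSeries.single (1 : ℤ) (1 : k)) =
      algebraMap k (LaurentSeries k) ζ * HahnSeries.single (1 : ℤ) (1 : k))
    (p : Polynomial k) (hp : p ≠ 0)
    (hodd : ∀ n, p.coeff n ≠ 0 → Odd n)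
    (h3 : ∀ n, p.coeff n ≠ 0 → ¬ (3 ∣ n))
    (a : LaurentSeries k)
    (ha : a = Polynomial.aeval
      ((HahnSeries.single (1 : ℤ) (1 : k))⁻¹ : LaurentSeries k) p)
    (ASL : AddSubgroup (LaurentSeries k))
    (hASL : ASL = AddSubgroup.closure {y : LaurentSeries k | ∃ f, y = f ^ 2 - f}) :
    a + σ a + σ (σ a) = 0 ∧
    Nat.card (AddSubgroup.closure
      ({QuotientAddGroup.mk a, QuotientAddGroup.mk (σ a),
        QuotientAddGroup.mk (σ (σ a))} : Set (LaurentSeries k ⧸ ASL))) = 4 := by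
  have hζ3 : ζ ^ 3 = 1 := hζ.pow_eq_one
  have hζ0 : ζ ≠ 0 := fun h => by rw [h] at hζ3; simp at hζ3
  -- t⁻¹ = single (-1) 1
  have ht : ((HahnSeries.single (1 : ℤ) (1 : k))⁻¹ : LaurentSeries k)
      = HahnSeries.single (-1 : ℤ) (1 : k) := by
    refine inv_eq_of_mul_eq_one_right ?_
    rw [HahnSeries.single_mul_single]
    norm_num
  have haev : a = ev (1 : k) p := by rw [ha, ht]; rfl
  -- σ (single (-1) u) = single (-1) (u * ζ^2)
  have hσinv : ∀ u : k, σ (HahnSeries.single (-1 : ℤ) u)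
      = HahnSeries.single (-1 : ℤ) (u * ζ ^ 2) := by
    intro u
    have h1 : HahnSeries.single (-1 : ℤ) u
        = algebraMap k (LaurentSeries k) u * HahnSeries.single (-1 : ℤ) (1 : k) := by
      rw [algMap, HahnSeries.single_mul_single]; norm_num
    have hti : σ (HahnSeries.single (-1 : ℤ) (1 : k))
        = HahnSeries.single (-1 : ℤ) (ζ ^ 2) := by
      rw [← ht, map_inv₀, hσ, mul_inv, ht,
        ← map_inv₀ (algebraMap k (LaurentSeries k)) ζ]
      have : ζ⁻¹ = ζ ^ 2 := inv_eq_of_mul_eq_one_right (by linear_combination hζ3)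
      rw [this, algMap, HahnSeries.single_mul_single]
      norm_num
    rw [h1, map_mul, AlgEquiv.commutes, hti, algMap, HahnSeries.single_mul_single]
    norm_num
  have hσev : ∀ (u : k) (q : Polynomial k), σ (ev u q) = ev (u * ζ ^ 2) q := by
    intro u q
    rw [ev, ev, ← Polynomial.aeval_algHom_apply, hσinv]
  have hσa : σ a = ev (ζ ^ 2) p := by rw [haev, hσev, one_mul]
  have hσσa : σ (σ a) = ev ζ p := by
    rw [hσa, hσev]
    congr 1
    linear_combination ζ * hζ3
  -- `1 + w + w² = 0` for w a nontrivial cube root of 1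
  have hroot : ∀ n : ℕ, ¬ (3 ∣ n) → 1 + ζ ^ (2 * n) + ζ ^ n = 0 := by
    intro n hn
    have hw3 : (ζ ^ n) ^ 3 = 1 := by
      rw [← pow_mul, mul_comm, pow_mul, hζ3, one_pow]
    have hw1 : ζ ^ n ≠ 1 := fun h => hn ((hζ.pow_eq_one_iff_dvd n).mp h)
    have hfac : (ζ ^ n - 1) * ((ζ ^ n) ^ 2 + ζ ^ n + 1) = 0 := by
      linear_combination hw3
    rcases mul_eq_zero.mp hfac with h | h
    · exact absurd (sub_eq_zero.mp h) hw1
    · rw [show 2 * n = n * 2 by ring, pow_mul]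
      linear_combination h
  -- Part 1
  have part1 : a + σ a + σ (σ a) = 0 := by
    rw [hσσa, hσa, haev]
    ext m
    rw [HahnSeries.coeff_add, HahnSeries.coeff_add, HahnSeries.coeff_zero]
    rcases lt_or_ge 0 m with hm | hm
    · rw [ev_coeff_pos _ _ _ hm, ev_coeff_pos _ _ _ hm, ev_coeff_pos _ _ _ hm]; ring
    · have hm' : m = -(((-m).toNat : ℤ)) := by omega
      rw [hm', ev_coeff_neg, ev_coeff_neg, ev_coeff_neg]
      by_cases hc : p.coeff (-m).toNat = 0
      · rw [hc]; ring
      · have := hroot (-m).toNat (h3 _ hc)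
        rw [one_pow, ← pow_mul]
        linear_combination (p.coeff (-m).toNat) * this
  refine ⟨part1, ?_⟩
  -- characteristic-two facts
  have h2k : ∀ c : k, c + c = 0 := fun c => by
    have : (2 : k) = 0 := by
      have := CharP.cast_eq_zero k 2
      exact_mod_cast this
    linear_combination c * this
  have h2 : ∀ x : LaurentSeries k, x + x = 0 := by
    intro x
    ext m
    rw [HahnSeries.coeff_add, HahnSeries.coeff_zero]
    exact h2k _
  -- the set of `f² - f` is already a subgroup
  let T : AddSubgroup (LaurentSeries k) :=
  { carrier := {y : LaurentSeries k | ∃ f, y = f ^ 2 - f}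
    zero_mem' := ⟨0, by ring⟩
    add_mem' := by
      rintro x y ⟨f, rfl⟩ ⟨g, rfl⟩
      refine ⟨f + g, ?_⟩
      rw [show (f + g) ^ 2 - (f + g) = (f ^ 2 - f) + (g ^ 2 - g) + (f * g + f * g) by ring,
        h2 (f * g), add_zero]
    neg_mem' := by
      rintro x ⟨f, rfl⟩
      exact ⟨f, by rw [neg_eq_of_add_eq_zero_left (h2 _)]⟩ }
  have hASLT : ASL = T := by
    rw [hASL]
    exact AddSubgroup.closure_eq T
  have hmem : ∀ x : LaurentSeries k, x ∈ ASL ↔ ∃ f, x = f ^ 2 - f := by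
    intro x; rw [hASLT]; exact Iff.rfl
  -- nonmembership facts
  obtain ⟨n₀, hn₀⟩ : ∃ n, p.coeff n ≠ 0 := by
    by_contra h
    push_neg at h
    exact hp (Polynomial.ext fun n => by simp [h n])
  have hnot : ∀ (x : LaurentSeries k), x ≠ 0 →
      (∀ m : ℤ, x.coeff m ≠ 0 → Odd m ∧ m < 0) → x ∉ ASL := by
    intro x hx hs hmem'
    obtain ⟨f, hf⟩ := (hmem x).mp hmem'
    exact not_sq_sub x hx hs f hf
  have hζ2n : ∀ n : ℕ, ¬ (3 ∣ n) → (1 : k) + (ζ ^ 2) ^ n ≠ 0 := by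
    intro n hn h
    have h1 : (ζ ^ 2) ^ n = 1 := by linear_combination h - h2k 1
    rw [← pow_mul] at h1
    have := (hζ.pow_eq_one_iff_dvd _).mp h1
    omega
  have haNZ : a ∉ ASL := by
    refine hnot a ?_ ?_
    · rw [haev]
      intro h0
      have := ev_coeff_neg (1 : k) p n₀
      rw [h0, HahnSeries.coeff_zero, one_pow, mul_one] at this
      exact hn₀ this.symm
    · rw [haev]; exact ev_supp _ _ hodd
  have hσaNZ : σ a ∉ ASL := by
    refine hnot _ ?_ ?_
    · rw [hσa]
      intro h0
      have := ev_coeff_neg (ζ ^ 2) p n₀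
      rw [h0, HahnSeries.coeff_zero] at this
      exact (mul_ne_zero hn₀ (pow_ne_zero _ (pow_ne_zero _ hζ0))) this.symm
    · rw [hσa]; exact ev_supp _ _ hodd
  have habNZ : a + σ a ∉ ASL := by
    refine hnot _ ?_ ?_
    · intro h0
      have hco : (a + σ a).coeff (-(n₀ : ℤ)) = p.coeff n₀ * (1 + (ζ ^ 2) ^ n₀) := by
        rw [hσa, haev, HahnSeries.coeff_add, ev_coeff_neg, ev_coeff_neg]
        ring
      rw [h0, HahnSeries.coeff_zero] at hco
      exact (mul_ne_zero hn₀ (hζ2n n₀ (h3 _ hn₀))) hco.symm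
    · intro m hm
      rw [HahnSeries.coeff_add] at hm
      by_cases h1 : (a.coeff m) ≠ 0
      · exact (haev ▸ ev_supp (1:k) p hodd m) (haev ▸ h1)
      · push_neg at h1
        rw [h1, zero_add] at hm
        exact (hσa ▸ ev_supp (ζ^2) p hodd m) (hσa ▸ hm)
  have hσσ : σ (σ a) = a + σ a := by
    have h2' := h2 (σ (σ a))
    linear_combination h2' - part1
  exact card_four ASL h2 a (σ a) (σ (σ a)) hσσ haNZ hσaNZ habNZ
end

section
/- Let R be a complete DVR of characteristic 0 with residue characteristic 2, valuation v normalized so v(2) = 1, and containing a primitive cube root of unity ζ₃ and elements c₁, c₅. Suppose b ∈ R with v(b) = 2/5. Set a₁ = −2b − 4c₁, a₂ = b², a₃ = −4c₅/b², F(U) = 1 + a₁U + a₂U² + a₃U³, and H(U) = 1 + bU + b²U². Then F(ζ₃U)F(ζ₃²U) − H(U)² − 4c₁U − 4c₅U⁵ is a polynomial in U all of whose coefficients have valuation strictly greater than 2. -/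
open Polynomial

/-- The base case `ν = 5`: let `R` be a complete DVR of mixed characteristic `(0,2)`
(with valuation normalized so that `v(2) = 1`) containing a primitive cube root of
unity `ζ₃` and an element `b` with `v(b) = 2/5` (encoded as `b⁵ = 4·(unit)`).  With
`a₁ = −2b − 4c₁`, `a₂ = b²`, `a₃ = −4c₅/b²`, `F(U) = 1 + a₁U + a₂U² + a₃U³` and
`H(U) = 1 + bU + b²U²`, every coefficient of
`F(ζ₃U)F(ζ₃²U) − H(U)² − 4c₁U − 4c₅U⁵` has valuation strictly greater than 2,
i.e. lies in `4𝔪`. -/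
theorem base_case_break_five (R : Type*) [CommRing R] [IsDomain R]
    [IsDiscreteValuationRing R] [CharZero R]
    [IsAdicComplete (IsLocalRing.maximalIdeal R) R]
    (hres2 : (2 : R) ∈ IsLocalRing.maximalIdeal R)
    (ζ : R) (hζ : ζ ^ 2 + ζ + 1 = 0)
    (c₁ c₅ b : R) (hb : ∃ u : Rˣ, b ^ 5 = 4 * (u : R))
    (a₁ a₂ a₃ : R) (ha₁ : a₁ = -2 * b - 4 * c₁) (ha₂ : a₂ = b ^ 2)
    (ha₃ : b ^ 2 * a₃ = -(4 * c₅))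
    (F H : Polynomial R)
    (hF : F = 1 + C a₁ * X + C a₂ * X ^ 2 + C a₃ * X ^ 3)
    (hH : H = 1 + C b * X + C (b ^ 2) * X ^ 2) :
    ∀ n : ℕ,
      ((F.comp (C ζ * X)) * (F.comp (C (ζ ^ 2) * X)) - H ^ 2 - C (4 * c₁) * X
          - C (4 * c₅) * X ^ 5).coeff n ∈
        Ideal.span {(4 : R)} * IsLocalRing.maximalIdeal R := by
  obtain ⟨u, hbu⟩ := hb
  have h2ne : (2 : R) ≠ 0 := two_ne_zero
  have h4ne : (4 : R) ≠ 0 := by norm_num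
  obtain ⟨π, hπ⟩ := IsDiscreteValuationRing.exists_irreducible R
  have hπ0 : π ≠ 0 := hπ.ne_zero
  have hmax : IsLocalRing.maximalIdeal R = Ideal.span {π} := hπ.maximalIdeal_eq
  have hbne : b ≠ 0 := by
    intro h
    have h40 : (4 : R) * u = 0 := by rw [← hbu, h]; norm_num
    rcases mul_eq_zero.mp h40 with h' | h'
    · exact h4ne h'
    · exact u.ne_zero h'
  obtain ⟨t, τ, h2eq⟩ := IsDiscreteValuationRing.eq_unit_mul_pow_irreducible h2ne hπ
  obtain ⟨s, β, hbeq⟩ := IsDiscreteValuationRing.eq_unit_mul_pow_irreducible hbne hπ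
  have key : (β : R) ^ 5 * π ^ (5 * s) = (τ : R) ^ 2 * (u : R) * π ^ (2 * t) := by
    have h4' : (4 : R) = (τ : R) ^ 2 * π ^ (2 * t) := by
      rw [show (4 : R) = 2 ^ 2 by norm_num, h2eq]; ring
    rw [hbeq, h4'] at hbu
    linear_combination hbu
  have hst : 5 * s = 2 * t := by
    by_contra hne
    rcases Nat.lt_or_ge (5 * s) (2 * t) with hlt | hge
    · obtain ⟨d, hd'⟩ : ∃ d, 2 * t = (d + 1) + 5 * s := ⟨2 * t - 5 * s - 1, by omega⟩
      have e : (β : R) ^ 5 * π ^ (5 * s)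
          = ((τ : R) ^ 2 * (u : R) * π ^ (d + 1)) * π ^ (5 * s) := by
        rw [key, hd', pow_add]; ring
      have e2 : (β : R) ^ 5 = (τ : R) ^ 2 * (u : R) * π ^ (d + 1) :=
        mul_right_cancel₀ (pow_ne_zero _ hπ0) e
      have hd : π ∣ (β : R) ^ 5 :=
        ⟨(τ : R) ^ 2 * (u : R) * π ^ d, by rw [e2, pow_succ]; ring⟩
      exact hπ.not_isUnit (isUnit_of_dvd_unit hd (β.isUnit.pow 5))
    · obtain ⟨d, hd'⟩ : ∃ d, 5 * s = (d + 1) + 2 * t := ⟨5 * s - 2 * t - 1, by omega⟩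
      have e : ((β : R) ^ 5 * π ^ (d + 1)) * π ^ (2 * t)
          = ((τ : R) ^ 2 * (u : R)) * π ^ (2 * t) := by
        rw [← key, hd', pow_add]; ring
      have e2 : (β : R) ^ 5 * π ^ (d + 1) = (τ : R) ^ 2 * (u : R) :=
        mul_right_cancel₀ (pow_ne_zero _ hπ0) e
      have hd : π ∣ (τ : R) ^ 2 * (u : R) :=
        ⟨(β : R) ^ 5 * π ^ d, by rw [← e2, pow_succ]; ring⟩
      exact hπ.not_isUnit (isUnit_of_dvd_unit hd ((τ.isUnit.pow 2).mul u.isUnit))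
  have ht1 : 1 ≤ t := by
    rcases Nat.eq_zero_or_pos t with h0 | h; swap
    · exact h
    exfalso
    rw [hmax, Ideal.mem_span_singleton, h2eq, h0, pow_zero, mul_one] at hres2
    exact hπ.not_isUnit (isUnit_of_dvd_unit hres2 τ.isUnit)
  obtain ⟨m', hm'⟩ : ∃ m', t = 5 * m' + 5 := ⟨t / 5 - 1, by omega⟩
  have hsE : s = 2 * m' + 2 := by omega
  have h2E : (2 : R) = (τ : R) * π ^ (5 * m' + 5) := by rw [h2eq, hm']
  have hbE : b = (β : R) * π ^ (2 * m' + 2) := by rw [hbeq, hsE]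
  have h4E : (4 : R) = (τ : R) ^ 2 * π ^ (10 * m' + 10) := by
    rw [show (4 : R) = 2 ^ 2 by norm_num, h2E]; ring
  have h16E : (16 : R) = (τ : R) ^ 4 * π ^ (20 * m' + 20) := by
    rw [show (16 : R) = 2 ^ 4 by norm_num, h2E]; ring
  have hττ : (τ : R) * ((τ⁻¹ : Rˣ) : R) = 1 := τ.mul_inv
  have hββ : (β : R) * ((β⁻¹ : Rˣ) : R) = 1 := β.mul_inv
  set r : R := -(((β⁻¹ : Rˣ) : R) ^ 2 * (τ : R) ^ 2 * c₅) with hr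
  have ha3E : a₃ = r * π ^ (6 * m' + 6) := by
    have e : π ^ (4 * m' + 4) * ((β : R) ^ 2 * a₃)
        = π ^ (4 * m' + 4) * (-((τ : R) ^ 2 * c₅ * π ^ (6 * m' + 6))) := by
      have lhs : π ^ (4 * m' + 4) * ((β : R) ^ 2 * a₃) = b ^ 2 * a₃ := by rw [hbE]; ring
      rw [lhs, ha₃, h4E]; ring
    have h1 : (β : R) ^ 2 * a₃ = -((τ : R) ^ 2 * c₅ * π ^ (6 * m' + 6)) :=
      mul_left_cancel₀ (pow_ne_zero _ hπ0) e
    rw [hr]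
    linear_combination ((β⁻¹ : Rˣ) : R) ^ 2 * h1 +
      (-(a₃ * (1 + (β : R) * ((β⁻¹ : Rˣ) : R)))) * hββ
  -- memberships of the four nonzero coefficients
  have hmem2 : 16 * (b * c₁ + c₁ ^ 2) ∈
      Ideal.span {(4 : R)} * IsLocalRing.maximalIdeal R := by
    rw [hmax, Ideal.span_singleton_mul_span_singleton, Ideal.mem_span_singleton]
    exact ⟨(τ : R) ^ 2 * π ^ (10 * m' + 9) * (b * c₁ + c₁ ^ 2), by
      rw [h16E, h4E]; ring⟩
  have hmem3 : 2 * a₃ + 4 * (c₁ * b ^ 2) ∈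
      Ideal.span {(4 : R)} * IsLocalRing.maximalIdeal R := by
    rw [hmax, Ideal.span_singleton_mul_span_singleton, Ideal.mem_span_singleton]
    refine ⟨((τ⁻¹ : Rˣ) : R) * r * π ^ m' + c₁ * (β : R) ^ 2 * π ^ (4 * m' + 3), ?_⟩
    rw [h4E, h2E, ha3E, hbE]
    linear_combination (-(r * π ^ (11 * m' + 11) * (τ : R))) * hττ
  have hmem4 : 2 * (b * a₃) + 4 * (c₁ * a₃) ∈
      Ideal.span {(4 : R)} * IsLocalRing.maximalIdeal R := by
    rw [hmax, Ideal.span_singleton_mul_span_singleton, Ideal.mem_span_singleton]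
    refine ⟨((τ⁻¹ : Rˣ) : R) * (β : R) * r * π ^ (3 * m' + 2)
      + c₁ * r * π ^ (6 * m' + 5), ?_⟩
    rw [h4E, h2E, ha3E, hbE]
    linear_combination (-((τ : R) * (β : R) * r * π ^ (13 * m' + 13))) * hττ
  have hmem6 : a₃ ^ 2 ∈ Ideal.span {(4 : R)} * IsLocalRing.maximalIdeal R := by
    rw [hmax, Ideal.span_singleton_mul_span_singleton, Ideal.mem_span_singleton]
    refine ⟨((τ⁻¹ : Rˣ) : R) ^ 2 * r ^ 2 * π ^ (2 * m' + 1), ?_⟩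
    rw [h4E, ha3E]
    linear_combination
      (-(r ^ 2 * π ^ (12 * m' + 12) * (1 + (τ : R) * ((τ⁻¹ : Rˣ) : R)))) * hττ
  -- the polynomial identity
  have hζC : (C ζ) ^ 2 + C ζ + 1 = (0 : R[X]) := by
    have h := congrArg C hζ
    simpa using h
  have hA3C : (C b) ^ 2 * C a₃ + 4 * C c₅ = (0 : R[X]) := by
    have h := congrArg C ha₃
    simp only [map_mul, map_pow, map_neg, map_ofNat] at h
    linear_combination h
  have hpoly : (F.comp (C ζ * X)) * (F.comp (C (ζ ^ 2) * X)) - H ^ 2 - C (4 * c₁) * X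
      - C (4 * c₅) * X ^ 5
      = C (16 * (b * c₁ + c₁ ^ 2)) * X ^ 2 + C (2 * a₃ + 4 * (c₁ * b ^ 2)) * X ^ 3
        + C (2 * (b * a₃) + 4 * (c₁ * a₃)) * X ^ 4 + C (a₃ ^ 2) * X ^ 6 := by
    subst hF hH ha₁ ha₂
    simp only [add_comp, mul_comp, pow_comp, one_comp, C_comp, X_comp]
    simp only [map_add, map_sub, map_mul, map_pow, map_neg, map_one, map_ofNat]
    linear_combination
      ((-2 * C a₃ * X ^ 3 - (C a₃) ^ 2 * X ^ 6 - 4 * C c₁ * X - 4 * C c₁ * C a₃ * X ^ 4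
          - 16 * (C c₁) ^ 2 * X ^ 2 - 2 * C b * X - 2 * C b * C a₃ * X ^ 4
          - 16 * C b * C c₁ * X ^ 2 - 3 * (C b) ^ 2 * X ^ 2 + (C b) ^ 2 * C a₃ * X ^ 5
          - 4 * (C b) ^ 2 * C c₁ * X ^ 3 - 2 * (C b) ^ 3 * X ^ 3 - (C b) ^ 4 * X ^ 4)
        + C ζ * (2 * C a₃ * X ^ 3 + (C a₃) ^ 2 * X ^ 6 + 4 * C c₁ * C a₃ * X ^ 4
          + 16 * (C c₁) ^ 2 * X ^ 2 + 2 * C b * C a₃ * X ^ 4 + 16 * C b * C c₁ * X ^ 2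
          + 3 * (C b) ^ 2 * X ^ 2 - (C b) ^ 2 * C a₃ * X ^ 5 + 4 * (C b) ^ 2 * C c₁ * X ^ 3
          + 2 * (C b) ^ 3 * X ^ 3 + (C b) ^ 4 * X ^ 4)
        + (C ζ) ^ 2 * ((C b) ^ 2 * X ^ 2)
        + (C ζ) ^ 3 * (-(C a₃) * X ^ 3 - (C a₃) ^ 2 * X ^ 6 - 4 * C c₁ * C a₃ * X ^ 4
          - 2 * C b * C a₃ * X ^ 4 + (C b) ^ 2 * C a₃ * X ^ 5 - 4 * (C b) ^ 2 * C c₁ * X ^ 3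
          - 2 * (C b) ^ 3 * X ^ 3 - (C b) ^ 4 * X ^ 4)
        + (C ζ) ^ 4 * (C a₃ * X ^ 3 + (C a₃) ^ 2 * X ^ 6 + 4 * C c₁ * C a₃ * X ^ 4
          + 2 * C b * C a₃ * X ^ 4 - (C b) ^ 2 * C a₃ * X ^ 5 + (C b) ^ 4 * X ^ 4)
        + (C ζ) ^ 5 * (-4 * C c₁ * C a₃ * X ^ 4 - 2 * C b * C a₃ * X ^ 4)
        + (C ζ) ^ 6 * (-(C a₃) ^ 2 * X ^ 6 + (C b) ^ 2 * C a₃ * X ^ 5)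
        + (C ζ) ^ 7 * ((C a₃) ^ 2 * X ^ 6)) * hζC
      + (-(X : R[X]) ^ 5) * hA3C
  intro n
  rw [hpoly]
  simp only [coeff_add, coeff_C_mul, coeff_X_pow, mul_ite, mul_one, mul_zero]
  refine add_mem (add_mem (add_mem ?_ ?_) ?_) ?_ <;> split_ifs <;>
    first
      | exact hmem2 | exact hmem3 | exact hmem4 | exact hmem6
      | exact zero_mem _
end
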